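/- Residual recursion of the local Chebyshev method: Let δ_0 = 0, δ_1 = (1-α)/(1+α), δ_{t+1} = (2(1+α)/(1-α) - δ_t)^{-1}, Q = I - ((1-α)/(1+α)) W, b a vector, r^{(t)} = b - Q x^{(t)}, and given subsets S_t ⊆ V with S_0 = supp(r^{(0)}), define x^{(0)} = 0, x^{(1)} = r^{(0)}_{S_0}, and x^{(t+1)} = x^{(t)} + (1 + δ_t δ_{t+1}) r^{(t)}_{S_t} + δ_t δ_{t+1} (x^{(t)} - x^{(t-1)})_{S_t} for t ≥ 1. Then for every t ≥ 1, r^{(t+1)} - 2 δ_{t+1} W r^{(t)} + δ_t δ_{t+1} r^{(t-1)} = Σ_{j=0}^{t} (1 + δ_j δ_{j+1}) · (∏_{r=j+1}^{t} δ_r δ_{r+1}) · Q r^{(j)}_{S_{j,t}}, where S_{j,t} = S_j ∩ … ∩ S_{t-1} ∩ (V ∖ S_t) for j < t and S_{t,t} = V ∖ S_t. -/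

import Mathlib

lemma locCH_mem_inf_aux {V : Type*} [Fintype V] [DecidableEq V] (S : ℕ → Finset V)
    (T : Finset ℕ) (v : V) : v ∈ T.inf S ↔ ∀ i ∈ T, v ∈ S i := by
  induction T using Finset.induction with
  | empty => simp [Finset.top_eq_univ]
  | insert _ _ h ih => simp [Finset.inf_insert, Finset.inf_eq_inter, Finset.mem_inter, ih]

/-- Residual recursion of the local Chebyshev method. -/
theorem locCH_residual_recursion
    {V : Type*} [Fintype V] [DecidableEq V] [Nonempty V]
    (A : Matrix V V ℝ) (hsym : A.IsSymm)
    (h01 : ∀ u v, A u v = 0 ∨ A u v = 1)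
    (hdiag : ∀ u, A u u = 0)
    (d : V → ℝ) (hd : ∀ u, d u = ∑ v, A u v)
    (hdpos : ∀ u, 0 < d u)
    (α : ℝ) (hα0 : 0 < α) (hα1 : α < 1)
    (W : Matrix V V ℝ)
    (hW : ∀ v w, W v w = A v w / (Real.sqrt (d v) * Real.sqrt (d w)))
    (Q : Matrix V V ℝ) (hQ : Q = 1 - ((1 - α) / (1 + α)) • W)
    (δ : ℕ → ℝ) (hδ0 : δ 0 = 0) (hδ1 : δ 1 = (1 - α) / (1 + α))
    (hδrec : ∀ t, 1 ≤ t → δ (t + 1) = (2 * (1 + α) / (1 - α) - δ t)⁻¹)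
    (b : V → ℝ) (x r : ℕ → V → ℝ)
    (hr : ∀ t, r t = b - Q.mulVec (x t))
    (S : ℕ → Finset V) (hS0 : ∀ v, v ∈ S 0 ↔ r 0 v ≠ 0)
    (hx0 : x 0 = 0)
    (hx1 : x 1 = fun v => if v ∈ S 0 then r 0 v else 0)
    (hxupd : ∀ t, 1 ≤ t → x (t + 1) = x t
        + (1 + δ t * δ (t + 1)) • (fun v => if v ∈ S t then r t v else 0)
        + (δ t * δ (t + 1)) • (fun v => if v ∈ S t then x t v - x (t - 1) v else 0)) :
    ∀ t, 1 ≤ t →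
      r (t + 1) - (2 * δ (t + 1)) • W.mulVec (r t) + (δ t * δ (t + 1)) • r (t - 1) =
        ∑ j ∈ Finset.range (t + 1),
          ((1 + δ j * δ (j + 1)) * ∏ i ∈ Finset.Icc (j + 1) t, δ i * δ (i + 1)) •
            Q.mulVec
              (fun v => if v ∈ ((Finset.Icc j (t - 1)).inf S) \ S t then r j v else 0) := by
  have hα1' : (0:ℝ) < 1 - α := by linarith
  have hα2 : (0:ℝ) < 1 + α := by linarith
  -- bounds on δ
  have hδb : ∀ n, 0 ≤ δ n ∧ δ n < 1 := by
    intro n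
    induction n with
    | zero => rw [hδ0]; exact ⟨le_refl 0, one_pos⟩
    | succ m ih =>
      rcases Nat.eq_zero_or_pos m with h | h
      · subst h
        rw [hδ1]
        refine ⟨le_of_lt (div_pos hα1' hα2), ?_⟩
        rw [div_lt_one hα2]; linarith
      · rw [hδrec m h]
        have hK : (1:ℝ) < 2 * (1 + α) / (1 - α) - δ m := by
          have h2 : (2:ℝ) < 2 * (1 + α) / (1 - α) := by
            rw [lt_div_iff₀ hα1']; nlinarith
          linarith [ih.2]
        exact ⟨inv_nonneg.mpr (by linarith), inv_lt_one_of_one_lt₀ hK⟩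
  -- key δ identity
  have hδid : ∀ n, 1 ≤ n → 2 * δ (n + 1) = (1 + δ n * δ (n + 1)) * ((1 - α) / (1 + α)) := by
    intro n hn
    have hK : (1:ℝ) < 2 * (1 + α) / (1 - α) - δ n := by
      have h2 : (2:ℝ) < 2 * (1 + α) / (1 - α) := by
        rw [lt_div_iff₀ hα1']; nlinarith
      linarith [(hδb n).2]
    have h1 : δ (n + 1) * (2 * (1 + α) / (1 - α) - δ n) = 1 := by
      rw [hδrec n hn]; exact inv_mul_cancel₀ (by linarith)
    field_simp at h1 ⊢
    nlinarith [h1]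
  -- the difference formula for successive iterates
  have hdiff : ∀ n, x (n + 1) - x n = ∑ j ∈ Finset.range (n + 1),
      ((1 + δ j * δ (j + 1)) * ∏ i ∈ Finset.Icc (j + 1) n, δ i * δ (i + 1)) •
        (fun v => if v ∈ (Finset.Icc j n).inf S then r j v else 0) := by
    intro n
    induction n with
    | zero =>
      funext v
      simp [hx0, hx1, hδ0, Finset.sum_range_succ]
    | succ m ih =>
      have hupd := hxupd (m + 1) (by omega)
      rw [Nat.add_sub_cancel] at hupd
      funext v
      have hv := congrFun ih v
      simp only [Pi.sub_apply, Finset.sum_apply, Pi.smul_apply, smul_eq_mul] at hv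
      have hx2 : x (m + 1 + 1) v - x (m + 1) v =
          (1 + δ (m + 1) * δ (m + 1 + 1)) * (if v ∈ S (m + 1) then r (m + 1) v else 0)
          + δ (m + 1) * δ (m + 1 + 1) *
            (if v ∈ S (m + 1) then x (m + 1) v - x m v else 0) := by
        rw [hupd]; simp [smul_eq_mul]; ring
      simp only [Pi.sub_apply, Finset.sum_apply, Pi.smul_apply, smul_eq_mul]
      rw [hx2, Finset.sum_range_succ]
      have htop : (Finset.Icc (m + 1) (m + 1)).inf S = S (m + 1) := by
        simp [Finset.Icc_self]
      rw [htop]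
      have hempty : Finset.Icc (m + 1 + 1) (m + 1) = ∅ := Finset.Icc_eq_empty (by omega)
      rw [hempty, Finset.prod_empty, mul_one]
      by_cases hvS : v ∈ S (m + 1)
      · simp only [if_pos hvS]
        have hsum : ∑ j ∈ Finset.range (m + 1),
            ((1 + δ j * δ (j + 1)) * ∏ i ∈ Finset.Icc (j + 1) (m + 1), δ i * δ (i + 1)) *
              (if v ∈ (Finset.Icc j (m + 1)).inf S then r j v else 0)
            = δ (m + 1) * δ (m + 1 + 1) * ∑ j ∈ Finset.range (m + 1),
              ((1 + δ j * δ (j + 1)) * ∏ i ∈ Finset.Icc (j + 1) m, δ i * δ (i + 1)) *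
                (if v ∈ (Finset.Icc j m).inf S then r j v else 0) := by
          rw [Finset.mul_sum]
          apply Finset.sum_congr rfl
          intro j hj
          have hjm : j ≤ m := Nat.lt_succ_iff.mp (Finset.mem_range.mp hj)
          have hprod : ∏ i ∈ Finset.Icc (j + 1) (m + 1), δ i * δ (i + 1)
              = (∏ i ∈ Finset.Icc (j + 1) m, δ i * δ (i + 1)) * (δ (m + 1) * δ (m + 1 + 1)) :=
            Finset.prod_Icc_succ_top (by omega) _
          have hset : (v ∈ (Finset.Icc j (m + 1)).inf S) ↔ (v ∈ (Finset.Icc j m).inf S) := by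
            rw [locCH_mem_inf_aux, locCH_mem_inf_aux]
            constructor
            · intro h i hi
              exact h i (Finset.mem_Icc.mpr ⟨(Finset.mem_Icc.mp hi).1, by
                have := (Finset.mem_Icc.mp hi).2; omega⟩)
            · intro h i hi
              rcases Nat.lt_or_ge i (m + 1) with h' | h'
              · exact h i (Finset.mem_Icc.mpr ⟨(Finset.mem_Icc.mp hi).1, by omega⟩)
              · have : i = m + 1 := by
                  have := (Finset.mem_Icc.mp hi).2; omega
                rw [this]; exact hvS
          rw [hprod]
          by_cases hvT : v ∈ (Finset.Icc j m).inf S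
          · rw [if_pos hvT, if_pos (hset.mpr hvT)]; ring
          · rw [if_neg hvT, if_neg (fun h => hvT (hset.mp h))]; ring
        rw [hv, hsum]
        ring
      · simp only [if_neg hvS]
        have hz : ∀ j ∈ Finset.range (m + 1),
            ((1 + δ j * δ (j + 1)) * ∏ i ∈ Finset.Icc (j + 1) (m + 1), δ i * δ (i + 1)) *
              (if v ∈ (Finset.Icc j (m + 1)).inf S then r j v else 0) = 0 := by
          intro j hj
          have hjm : j ≤ m := Nat.lt_succ_iff.mp (Finset.mem_range.mp hj)
          have : v ∉ (Finset.Icc j (m + 1)).inf S := by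
            rw [locCH_mem_inf_aux]
            intro h
            exact hvS (h (m + 1) (Finset.mem_Icc.mpr ⟨by omega, le_refl _⟩))
          rw [if_neg this, mul_zero]
        rw [Finset.sum_eq_zero hz]
        ring
  -- main statement
  intro t ht
  obtain ⟨s, rfl⟩ : ∃ s, t = s + 1 := ⟨t - 1, (Nat.succ_pred_eq_of_pos ht).symm⟩
  rw [Nat.add_sub_cancel]
  set c : ℝ := δ (s + 1) * δ (s + 1 + 1) with hcdef
  have hupd := hxupd (s + 1) (by omega)
  rw [Nat.add_sub_cancel] at hupd
  -- W in terms of Q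
  have hWQ : (2 * δ (s + 1 + 1)) • W.mulVec (r (s + 1)) =
      (1 + c) • (r (s + 1) - Q.mulVec (r (s + 1))) := by
    have : r (s + 1) - Q.mulVec (r (s + 1)) =
        ((1 - α) / (1 + α)) • W.mulVec (r (s + 1)) := by
      rw [hQ, Matrix.sub_mulVec, Matrix.one_mulVec, Matrix.smul_mulVec]
      abel
    rw [this, smul_smul, hδid (s + 1) (by omega)]
  rw [hWQ]
  -- masked vectors
  set mR : V → ℝ := (fun v => if v ∈ S (s + 1) then r (s + 1) v else 0) with hmR
  set mD : V → ℝ := (fun v => if v ∈ S (s + 1) then x (s + 1) v - x s v else 0) with hmD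
  have hkey : r (s + 1 + 1) - (1 + c) • (r (s + 1) - Q.mulVec (r (s + 1))) + c • r s =
      Q.mulVec ((1 + c) • (r (s + 1) - mR) + c • ((x (s + 1) - x s) - mD)) := by
    rw [hr (s + 1 + 1), hr (s + 1), hr s, hupd]
    simp only [Matrix.mulVec_add, Matrix.mulVec_sub, Matrix.mulVec_smul]
    module
  rw [hkey]
  -- RHS as Q.mulVec of a sum
  have hRHS : ∑ j ∈ Finset.range (s + 1 + 1),
      ((1 + δ j * δ (j + 1)) * ∏ i ∈ Finset.Icc (j + 1) (s + 1), δ i * δ (i + 1)) •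
        Q.mulVec (fun v => if v ∈ ((Finset.Icc j s).inf S) \ S (s + 1) then r j v else 0) =
      Q.mulVec (∑ j ∈ Finset.range (s + 1 + 1),
        ((1 + δ j * δ (j + 1)) * ∏ i ∈ Finset.Icc (j + 1) (s + 1), δ i * δ (i + 1)) •
          (fun v => if v ∈ ((Finset.Icc j s).inf S) \ S (s + 1) then r j v else 0)) := by
    simp only [← Matrix.mulVecLin_apply, map_sum, map_smul]
  rw [hRHS]
  apply congrArg
  -- the vector identity
  funext v
  have hv := congrFun (hdiff s) v
  simp only [Pi.sub_apply, Finset.sum_apply, Pi.smul_apply, smul_eq_mul] at hv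
  simp only [Pi.add_apply, Pi.sub_apply, Pi.smul_apply, smul_eq_mul, Finset.sum_apply, hmR, hmD]
  rw [Finset.sum_range_succ]
  have hempty : Finset.Icc (s + 1 + 1) (s + 1) = ∅ := Finset.Icc_eq_empty (by omega)
  have hempty2 : Finset.Icc (s + 1) s = ∅ := Finset.Icc_eq_empty (by omega)
  rw [hempty, Finset.prod_empty, mul_one, hempty2]
  simp only [Finset.inf_empty, Finset.top_eq_univ]
  by_cases hvS : v ∈ S (s + 1)
  · simp only [if_pos hvS]
    have hz : ∀ j ∈ Finset.range (s + 1),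
        ((1 + δ j * δ (j + 1)) * ∏ i ∈ Finset.Icc (j + 1) (s + 1), δ i * δ (i + 1)) *
          (if v ∈ ((Finset.Icc j s).inf S) \ S (s + 1) then r j v else 0) = 0 := by
      intro j hj
      rw [if_neg (by simp [Finset.mem_sdiff, hvS]), mul_zero]
    rw [Finset.sum_eq_zero hz]
    have : v ∉ Finset.univ \ S (s + 1) := by simp [hvS]
    rw [if_neg this]
    ring
  · simp only [if_neg hvS]
    have htopmem : v ∈ Finset.univ \ S (s + 1) := by simp [hvS]
    rw [if_pos htopmem]
    rw [hv]
    simp only [sub_zero]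
    rw [Finset.mul_sum]
    have hterm : ∀ j ∈ Finset.range (s + 1),
        c * (((1 + δ j * δ (j + 1)) * ∏ i ∈ Finset.Icc (j + 1) s, δ i * δ (i + 1)) *
          (if v ∈ (Finset.Icc j s).inf S then r j v else 0)) =
        ((1 + δ j * δ (j + 1)) * ∏ i ∈ Finset.Icc (j + 1) (s + 1), δ i * δ (i + 1)) *
          (if v ∈ ((Finset.Icc j s).inf S) \ S (s + 1) then r j v else 0) := by
      intro j hj
      have hjm : j ≤ s := Nat.lt_succ_iff.mp (Finset.mem_range.mp hj)
      have hprod : ∏ i ∈ Finset.Icc (j + 1) (s + 1), δ i * δ (i + 1)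
          = (∏ i ∈ Finset.Icc (j + 1) s, δ i * δ (i + 1)) * (δ (s + 1) * δ (s + 1 + 1)) :=
        Finset.prod_Icc_succ_top (by omega) _
      have hset : (v ∈ ((Finset.Icc j s).inf S) \ S (s + 1)) ↔ (v ∈ (Finset.Icc j s).inf S) := by
        simp [Finset.mem_sdiff, hvS]
      rw [hprod]
      by_cases hvT : v ∈ (Finset.Icc j s).inf S
      · rw [if_pos hvT, if_pos (hset.mpr hvT)]; rw [hcdef]; ring
      · rw [if_neg hvT, if_neg (fun h => hvT (hset.mp h))]; ring
    rw [Finset.sum_congr rfl hterm]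
    ring
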